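/- Let F be a filter of the Ignatiev semilattice (I, ∧) (a nonempty upward-closed subset closed under meets, where the order is α ≤ β iff αₙ ≥ βₙ for all n). Let Fᵢ = {αᵢ : α ∈ F} be its i-th projection. Then: (1) each Fᵢ is nonempty; (2) each Fᵢ is downward closed in the ordinals; (3) if α ∈ Fᵢ, β ∈ F_{i+1}, and ℓ(α) < β, then α + ω^β ∈ Fᵢ. -/

import Mathlib

open Ordinal

/-- `ell β` is the exponent of the last (smallest) term of the Cantor normal
form of `β` (base ω), with `ell 0 = 0`. -/
noncomputable def ell (b : Ordinal) : Ordinal :=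
  ((Ordinal.CNF omega0 b).map Prod.fst).getLastD 0

/-- `ε₀`, the least ordinal `α` with `ω ^ α = α`. -/
noncomputable def eps0 : Ordinal := Ordinal.nfp (fun a => omega0 ^ a) 0

/-- Membership in the Ignatiev set `I`: sequences of ordinals below `ε₀` with
`α (i+1) ≤ ℓ (α i)` for all `i`. -/
def IgMem (a : ℕ → Ordinal) : Prop :=
  (∀ i, a i < eps0) ∧ ∀ i, a (i + 1) ≤ ell (a i)

lemma ell_zero : ell 0 = 0 := by simp [ell]

lemma ell_rec {z : Ordinal} (hz : z ≠ 0) :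
    ell z = if z % omega0 ^ log omega0 z = 0 then log omega0 z
            else ell (z % omega0 ^ log omega0 z) := by
  unfold ell
  rw [CNF.ne_zero hz]
  split_ifs with h
  · simp [h]
  · have h2 : CNF omega0 (z % omega0 ^ log omega0 z) ≠ [] := by
      intro he
      apply h
      have := CNF.foldr omega0 (z % omega0 ^ log omega0 z)
      rw [he] at this
      simpa using this.symm
    have h3 : ((CNF omega0 (z % omega0 ^ log omega0 z)).map Prod.fst) ≠ [] := by
      simpa using h2
    rw [List.map_cons, List.getLastD_cons, List.getLastD_eq_getLast?, List.getLastD_eq_getLast?]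
    rw [List.getLast?_eq_getLast h3]
    simp

lemma ell_le_log (z : Ordinal) : ell z ≤ log omega0 z := by
  induction z using CNF.rec omega0 with
  | H0 => simp [ell_zero]
  | H o ho IH =>
    rw [ell_rec ho]
    split_ifs with h
    · rfl
    · exact IH.trans (log_mono_right _ (mod_opow_log_lt_self omega0 ho).le)

lemma ell_le_self (z : Ordinal) : ell z ≤ z := (ell_le_log z).trans (log_le_self _ _)


lemma ell_char : ∀ z : Ordinal, z ≠ 0 → ∀ y, (omega0 ^ y ∣ z ↔ y ≤ ell z) := by
  intro z
  induction z using CNF.rec omega0 with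
  | H0 => intro h; exact absurd rfl h
  | H z hz IH =>
    intro _ y
    set L := log omega0 z with hL
    set r := z % omega0 ^ L with hr
    have hoL : (omega0 : Ordinal) ^ L ≠ 0 := (opow_pos _ omega0_pos).ne'
    have hrL : r < omega0 ^ L := mod_lt _ hoL
    have hdam : omega0 ^ L * (z / omega0 ^ L) + r = z := div_add_mod z _
    have hyle : omega0 ^ y ∣ z → y ≤ L := by
      intro ⟨q, hq⟩
      have hq0 : q ≠ 0 := by rintro rfl; simp at hq; exact hz hq
      have h1 : omega0 ^ y ≤ z := by
        rw [hq]; exact Ordinal.le_mul_left _ (pos_iff_ne_zero.2 hq0)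
      have h2 : z < omega0 ^ (L + 1) := by
        rw [hL, ← Order.succ_eq_add_one]; exact lt_opow_succ_log_self one_lt_omega0 z
      have := h1.trans_lt h2
      rw [opow_lt_opow_iff_right one_lt_omega0] at this
      exact Order.lt_succ_iff.mp (by rwa [Order.succ_eq_add_one])

    rw [ell_rec hz, ← hL, ← hr]
    split_ifs with h
    · constructor
      · exact hyle
      · intro hy
        have : (omega0 : Ordinal) ^ L ∣ z := dvd_iff_mod_eq_zero.2 h
        exact dvd_trans (opow_dvd_opow _ hy) this
    · have hrne : r ≠ 0 := h
      have hlogr : log omega0 r < L := by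
        by_contra hc
        push_neg at hc
        exact absurd ((opow_le_opow_right omega0_pos hc).trans (opow_log_le_self _ hrne))
          hrL.not_ge
      rw [← IH hrne y]
      constructor
      · intro ⟨q, hq⟩
        have hyL : y ≤ L := hyle ⟨q, hq⟩
        have hsplit : (omega0 : Ordinal) ^ L = omega0 ^ y * omega0 ^ (L - y) := by
          rw [← opow_add, Ordinal.add_sub_cancel_of_le hyL]
        rw [hr, hq, hsplit, mul_mod_mul]
        exact Dvd.intro _ rfl
      · intro hdr
        have hy : y ≤ ell r := (IH hrne y).mp hdr
        have hyL : y < L := lt_of_le_of_lt (hy.trans (ell_le_log r)) hlogr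
        rw [← hdam]
        exact dvd_add (dvd_mul_of_dvd_left (opow_dvd_opow _ hyL.le) _) hdr


lemma ell_add_opow (x y : Ordinal) : ell (x + omega0 ^ y) = y := by
  have hoy : (0:Ordinal) < omega0 ^ y := opow_pos _ omega0_pos
  have hform : x + omega0 ^ y = omega0 ^ y * (x / omega0 ^ y + 1) := by
    conv_lhs => rw [← div_add_mod x (omega0 ^ y)]
    rw [mul_add, mul_one, add_assoc]
    congr 1
    exact add_absorp (mod_lt _ hoy.ne') le_rfl
  have hz : x + omega0 ^ y ≠ 0 := by
    rw [hform]
    exact (mul_pos hoy (lt_of_lt_of_le zero_lt_one le_add_self)).ne'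
  apply le_antisymm
  · by_contra hc
    push_neg at hc
    have hdvd : omega0 ^ (y + 1) ∣ x + omega0 ^ y :=
      (ell_char _ hz (y + 1)).2 (by rwa [← Order.succ_eq_add_one, Order.succ_le_iff])
    have hoy1 : (0:Ordinal) < omega0 ^ (y + 1) := opow_pos _ omega0_pos
    have hyy1 : (omega0:Ordinal) ^ y < omega0 ^ (y + 1) :=
      (opow_lt_opow_iff_right one_lt_omega0).2 (lt_add_one y)
    have hρ : x % omega0 ^ (y+1) + omega0 ^ y < omega0 ^ (y+1) :=
      principal_add_omega0_opow _ (mod_lt _ hoy1.ne') hyy1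
    have hform2 : x + omega0 ^ y
        = omega0 ^ (y+1) * (x / omega0 ^ (y+1)) + (x % omega0 ^ (y+1) + omega0 ^ y) := by
      rw [← add_assoc, div_add_mod]
    have := dvd_iff_mod_eq_zero.1 hdvd
    rw [hform2, mul_add_mod_self, Ordinal.mod_eq_of_lt hρ] at this
    exact absurd this (lt_of_lt_of_le hoy le_add_self).ne'
  · exact (ell_char _ hz y).1 ⟨_, hform⟩

lemma ell_key {x z y : Ordinal} (hxz : x ≤ z) (h1 : ell x < y) (h2 : y ≤ ell z)
    (hz : z ≠ 0) : x + omega0 ^ y ≤ z := by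
  have hoy : (0:Ordinal) < omega0 ^ y := opow_pos _ omega0_pos
  obtain ⟨q, hq⟩ := (ell_char z hz y).2 h2
  have hq0 : q ≠ 0 := by rintro rfl; simp at hq; exact hz hq
  rcases eq_or_ne x 0 with rfl | hx0
  · rw [zero_add, hq]
    exact Ordinal.le_mul_left _ (pos_iff_ne_zero.2 hq0)
  · have hndvd : ¬ (omega0 ^ y ∣ x) := fun hd => absurd ((ell_char x hx0 y).1 hd) h1.not_ge
    have hform : x + omega0 ^ y = omega0 ^ y * (x / omega0 ^ y + 1) := by
      conv_lhs => rw [← div_add_mod x (omega0 ^ y)]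
      rw [mul_add, mul_one, add_assoc]
      congr 1
      exact add_absorp (mod_lt _ hoy.ne') le_rfl
    rw [hform, hq]
    apply mul_le_mul_right
    rw [← Order.succ_eq_add_one, Order.succ_le_iff]
    by_contra hc
    push_neg at hc
    have hzx : z ≤ x := by
      rw [hq]
      exact (mul_le_mul_right hc _).trans (by
        conv_rhs => rw [← div_add_mod x (omega0 ^ y)]
        exact le_self_add)
    have hxez : x = z := le_antisymm hxz hzx
    rw [hxez] at h1
    exact absurd (h2.trans_lt h1) (lt_irrefl y)

lemma eps0_pos : 0 < eps0 := by
  have h := iterate_le_nfp (fun a => omega0 ^ a) 0 1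
  simp only [Function.iterate_one, opow_zero] at h
  exact lt_of_lt_of_le zero_lt_one h

lemma omega0_opow_eps0 : omega0 ^ eps0 = eps0 :=
  Ordinal.nfp_fp (isNormal_opow one_lt_omega0) 0

lemma opow_lt_eps0 {y : Ordinal} (hy : y < eps0) : omega0 ^ y < eps0 := by
  conv_rhs => rw [← omega0_opow_eps0]
  exact (opow_lt_opow_iff_right one_lt_omega0).2 hy

lemma add_lt_eps0 {x w : Ordinal} (hx : x < eps0) (hw : w < eps0) : x + w < eps0 := by
  have h : x + w < omega0 ^ eps0 :=
    principal_add_omega0_opow eps0 (by rwa [omega0_opow_eps0]) (by rwa [omega0_opow_eps0])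
  rwa [omega0_opow_eps0] at h


open Classical in
noncomputable def rnd (m u : Ordinal) : Ordinal :=
  if omega0 ^ u ∣ m then m else m + omega0 ^ u

lemma le_rnd (m u : Ordinal) : m ≤ rnd m u := by
  classical
  unfold rnd; split_ifs; exacts [le_rfl, le_self_add]

lemma rnd_ell {m : Ordinal} (hm : m ≠ 0) (u : Ordinal) : u ≤ ell (rnd m u) := by
  classical
  unfold rnd; split_ifs with h
  · exact (ell_char m hm u).1 h
  · rw [ell_add_opow]

lemma rnd_le {m u z : Ordinal} (hm : m ≠ 0) (hmz : m ≤ z) (hu : u ≤ ell z) : rnd m u ≤ z := by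
  classical
  unfold rnd; split_ifs with h
  · exact hmz
  · have hz : z ≠ 0 := fun hz0 => hm (le_antisymm (hz0 ▸ hmz) zero_le)
    have h2 : ¬ u ≤ ell m := fun hc => h ((ell_char m hm u).2 hc)
    exact ell_key hmz (lt_of_not_ge h2) hu hz

lemma rnd_lt_eps0 {m u : Ordinal} (hm : m < eps0) (hu : u < eps0) : rnd m u < eps0 := by
  classical
  unfold rnd; split_ifs; exacts [hm, add_lt_eps0 hm (opow_lt_eps0 hu)]

noncomputable def fseq (M : ℕ → Ordinal) (i : ℕ) : ℕ → Ordinal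
  | 0 => M (i + 1)
  | (k + 1) => rnd (M (i - k)) (fseq M i k)

lemma fseq_zero (M : ℕ → Ordinal) (i : ℕ) : fseq M i 0 = M (i + 1) := rfl
lemma fseq_succ (M : ℕ → Ordinal) (i k : ℕ) :
    fseq M i (k + 1) = rnd (M (i - k)) (fseq M i k) := rfl


/-- Projections of a filter of the Ignatiev semilattice: each projection is
nonempty, downward closed, and satisfies the closure condition (3). -/
theorem stmt_14 (F : Set (ℕ → Ordinal))
    (hsub : ∀ a ∈ F, IgMem a)
    (hne : F.Nonempty)
    (hup : ∀ a ∈ F, ∀ b : ℕ → Ordinal, IgMem b → (∀ n, b n ≤ a n) → b ∈ F)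
    (hmeet : ∀ a ∈ F, ∀ b ∈ F, ∀ c : ℕ → Ordinal,
      (IgMem c ∧ (∀ n, max (a n) (b n) ≤ c n) ∧
        ∀ d : ℕ → Ordinal, IgMem d → (∀ n, max (a n) (b n) ≤ d n) →
          ∀ n, c n ≤ d n) → c ∈ F) :
    (∀ i : ℕ, ∃ x : Ordinal, ∃ a ∈ F, a i = x) ∧
    (∀ i : ℕ, ∀ x y : Ordinal, (∃ a ∈ F, a i = x) → y ≤ x → ∃ a ∈ F, a i = y) ∧
    (∀ i : ℕ, ∀ x y : Ordinal, (∃ a ∈ F, a i = x) → (∃ a ∈ F, a (i + 1) = y) →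
      ell x < y → ∃ a ∈ F, a i = x + omega0 ^ y) := by
  classical
  obtain ⟨a0, ha0⟩ := hne
  have key2 : ∀ i : ℕ, ∀ x y : Ordinal, (∃ a ∈ F, a i = x) → y ≤ x → ∃ a ∈ F, a i = y := by
    rintro i x y ⟨a, haF, rfl⟩ hyx
    have hA := hsub a haF
    set b : ℕ → Ordinal := fun n => if n < i then a n else if n = i then y else 0 with hbdef
    have hble : ∀ n, b n ≤ a n := by
      intro n
      simp only [hbdef]
      split_ifs with h1 h2
      · exact le_rfl
      · subst h2; exact hyx
      · exact zero_le
    have hbI : IgMem b := by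
      refine ⟨fun n => lt_of_le_of_lt (hble n) (hA.1 n), fun n => ?_⟩
      rcases lt_trichotomy (n + 1) i with h | h | h
      · have hn : n < i := by omega
        have h1 : b (n + 1) = a (n + 1) := by simp [hbdef, h]
        have h2 : b n = a n := by simp [hbdef, hn]
        rw [h1, h2]; exact hA.2 n
      · have hn : n < i := by omega
        have h1 : b (n + 1) = y := by simp [hbdef, h]
        have h2 : b n = a n := by simp [hbdef, hn]
        rw [h1, h2]
        calc y ≤ a i := hyx
          _ = a (n + 1) := by rw [h]
          _ ≤ ell (a n) := hA.2 n
      · have h1 : b (n + 1) = 0 := by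
          simp only [hbdef]
          rw [if_neg (by omega), if_neg (by omega)]
        rw [h1]; exact zero_le
    refine ⟨b, hup a haF b hbI hble, by simp [hbdef]⟩
  refine ⟨fun i => ⟨a0 i, a0, ha0, rfl⟩, key2, ?_⟩
  rintro i x y ⟨a, haF, rfl⟩ ⟨b, hbF, rfl⟩ hxy
  have hA := hsub a haF
  have hB := hsub b hbF
  have hy0 : 0 < b (i + 1) := zero_le.trans_lt hxy
  have hbanti : Antitone b :=
    antitone_nat_of_succ_le fun k => (hB.2 k).trans (ell_le_self _)
  have hbpos : ∀ n, n ≤ i + 1 → 0 < b n := fun n hn => hy0.trans_le (hbanti hn)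
  set a' : ℕ → Ordinal := fun n => if n ≤ i then a n else 0 with ha'def
  set b' : ℕ → Ordinal := fun n => if n ≤ i + 1 then b n else 0 with hb'def
  have ha'le : ∀ n, a' n ≤ a n := by
    intro n; simp only [ha'def]; split_ifs; exacts [le_rfl, zero_le]
  have hb'le : ∀ n, b' n ≤ b n := by
    intro n; simp only [hb'def]; split_ifs; exacts [le_rfl, zero_le]
  have ha'I : IgMem a' := by
    refine ⟨fun n => lt_of_le_of_lt (ha'le n) (hA.1 n), fun n => ?_⟩
    by_cases h : n + 1 ≤ i
    · have hn : n ≤ i := by omega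
      have h1 : a' (n + 1) = a (n + 1) := by simp [ha'def, h]
      have h2 : a' n = a n := by simp [ha'def, hn]
      rw [h1, h2]; exact hA.2 n
    · have h1 : a' (n + 1) = 0 := by simp [ha'def, h]
      rw [h1]; exact zero_le
  have hb'I : IgMem b' := by
    refine ⟨fun n => lt_of_le_of_lt (hb'le n) (hB.1 n), fun n => ?_⟩
    by_cases h : n + 1 ≤ i + 1
    · have hn : n ≤ i + 1 := by omega
      have h1 : b' (n + 1) = b (n + 1) := by simp [hb'def, h]
      have h2 : b' n = b n := by simp [hb'def, hn]
      rw [h1, h2]; exact hB.2 n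
    · have h1 : b' (n + 1) = 0 := by simp [hb'def, h]
      rw [h1]; exact zero_le
  have ha'F : a' ∈ F := hup a haF a' ha'I ha'le
  have hb'F : b' ∈ F := hup b hbF b' hb'I hb'le
  set M : ℕ → Ordinal := fun n => max (a' n) (b' n) with hMdef
  have hMi1 : M (i + 1) = b (i + 1) := by
    simp only [hMdef, ha'def, hb'def]
    rw [if_neg (by omega), if_pos le_rfl, max_eq_right zero_le]
  have hbM : ∀ n, n ≤ i + 1 → b n ≤ M n := by
    intro n hn
    have : b' n = b n := by simp [hb'def, hn]
    rw [hMdef, ← this]; exact le_max_right _ _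
  have hMpos : ∀ n, n ≤ i + 1 → M n ≠ 0 := fun n hn =>
    ((hbpos n hn).trans_le (hbM n hn)).ne'
  have hMeps : ∀ n, M n < eps0 := fun n =>
    max_lt (lt_of_le_of_lt (ha'le n) (hA.1 n)) (lt_of_le_of_lt (hb'le n) (hB.1 n))
  have hMhigh : ∀ n, i + 1 < n → M n = 0 := by
    intro n hn
    simp only [hMdef, ha'def, hb'def]
    rw [if_neg (by omega), if_neg (by omega), max_self]
  set c : ℕ → Ordinal := fun n => if n ≤ i + 1 then fseq M i (i + 1 - n) else 0 with hcdef
  have hci1 : c (i + 1) = b (i + 1) := by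
    simp only [hcdef]
    rw [if_pos le_rfl, Nat.sub_self, fseq_zero, hMi1]
  have hcrec : ∀ n, n ≤ i → c n = rnd (M n) (c (n + 1)) := by
    intro n hn
    have e1 : i + 1 - n = (i - n) + 1 := by omega
    have e2 : i - (i - n) = n := by omega
    have e3 : i + 1 - (n + 1) = i - n := by omega
    simp only [hcdef]
    rw [if_pos (by omega), if_pos (by omega), e1, e3, fseq_succ, e2]
  have hchigh : ∀ n, i + 1 < n → c n = 0 := by
    intro n hn
    simp only [hcdef]
    rw [if_neg (by omega)]
  have hMc : ∀ n, M n ≤ c n := by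
    intro n
    rcases lt_trichotomy n (i + 1) with h | h | h
    · rw [hcrec n (by omega)]; exact le_rnd _ _
    · rw [h, hci1, hMi1]
    · rw [hMhigh n h]; exact zero_le
  have hfeps : ∀ k, fseq M i k < eps0 := by
    intro k
    induction k with
    | zero => rw [fseq_zero]; exact hMeps _
    | succ k ih => rw [fseq_succ]; exact rnd_lt_eps0 (hMeps _) ih
  have hceps : ∀ n, c n < eps0 := by
    intro n
    by_cases h : n ≤ i + 1
    · simp only [hcdef]; rw [if_pos h]; exact hfeps _
    · simp only [hcdef]; rw [if_neg h]; exact eps0_pos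
  have hcI : IgMem c := by
    refine ⟨hceps, fun n => ?_⟩
    rcases le_or_gt n i with h | h
    · rw [hcrec n h]
      exact rnd_ell (hMpos n (by omega)) _
    · rw [hchigh (n + 1) (by omega)]
      exact zero_le
  have hmin : ∀ d : ℕ → Ordinal, IgMem d → (∀ n, max (a' n) (b' n) ≤ d n) →
      ∀ n, c n ≤ d n := by
    intro d hd hdom
    have hdom' : ∀ n, M n ≤ d n := hdom
    have hstep : ∀ k, k ≤ i + 1 → fseq M i k ≤ d (i + 1 - k) := by
      intro k
      induction k with
      | zero => intro _; rw [fseq_zero, Nat.sub_zero]; exact hdom' (i + 1)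
      | succ k ih =>
        intro hk
        have hk' : k ≤ i := by omega
        have e1 : i + 1 - (k + 1) = i - k := by omega
        have e2 : i + 1 - k = (i - k) + 1 := by omega
        rw [fseq_succ, e1]
        refine rnd_le (hMpos (i - k) (by omega)) (hdom' _) ?_
        have h3 := ih (by omega)
        rw [e2] at h3
        exact h3.trans (hd.2 (i - k))
    intro n
    rcases le_or_gt n (i + 1) with h | h
    · have hc : c n = fseq M i (i + 1 - n) := by simp only [hcdef]; rw [if_pos h]
      rw [hc]
      have h3 := hstep (i + 1 - n) (by omega)
      have e : i + 1 - (i + 1 - n) = n := by omega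
      rwa [e] at h3
    · rw [hchigh n h]; exact zero_le
  have hcF : c ∈ F := hmeet a' ha'F b' hb'F c ⟨hcI, hMc, hmin⟩
  have hxc : a i ≤ c i := by
    have h1 : a' i = a i := by simp [ha'def]
    calc a i = a' i := h1.symm
      _ ≤ M i := le_max_left _ _
      _ ≤ c i := hMc i
  have helc : b (i + 1) ≤ ell (c i) := by
    have h1 := hcI.2 i
    rwa [hci1] at h1
  have hci0 : c i ≠ 0 := by
    have : (0 : Ordinal) < c i :=
      lt_of_lt_of_le (hbpos i (by omega)) ((hbM i (by omega)).trans (hMc i))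
    exact this.ne'
  have hfin : a i + omega0 ^ (b (i + 1)) ≤ c i := ell_key hxc hxy helc hci0
  exact key2 i (c i) (a i + omega0 ^ (b (i + 1))) ⟨c, hcF, rfl⟩ hfin
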